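/- Let V and W be vector spaces over a field of characteristic different from 2, and let 𝔸 be the affine space underlying V (i.e., V acting on itself by translation). A map φ : 𝔸 → W satisfies φ(x+P+Q) + φ(x) = φ(x+P) + φ(x+Q) for all x ∈ 𝔸 and P, Q ∈ V if and only if it satisfies φ(x+P) + φ(x−P) = 2·φ(x) for all x ∈ 𝔸 and P ∈ V. -/
import Mathlib


/-- Let `V` and `W` be vector spaces over a field `K` of characteristic
different from `2`, and let `𝔸` be the affine space underlying `V` (identified with `V`
acting on itself by translation).  A map `φ : 𝔸 → W` satisfies the parallelogram condition
`φ(x+P+Q) + φ(x) = φ(x+P) + φ(x+Q)` for all `x ∈ 𝔸`, `P Q ∈ V` if and only if it satisfies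
the degenerate parallelogram condition `φ(x+P) + φ(x−P) = 2·φ(x)` for all `x ∈ 𝔸`, `P ∈ V`. -/
theorem statement0 {K V W : Type*} [Field K] [AddCommGroup V] [Module K V]
    [AddCommGroup W] [Module K W] (hchar : (2 : K) ≠ 0) (φ : V → W) :
    (∀ x P Q : V, φ (x + P + Q) + φ x = φ (x + P) + φ (x + Q)) ↔
      ∀ x P : V, φ (x + P) + φ (x - P) = (2 : ℤ) • φ x := by
  constructor
  · intro h x P
    have h1 := h x P (-P)
    rw [add_neg_cancel_right] at h1
    rw [sub_eq_add_neg, ← h1, two_smul]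
  · intro h x P Q
    set a : V := (2 : K)⁻¹ • (P + Q) with ha
    set b : V := (2 : K)⁻¹ • (P - Q) with hb
    have half : (2 : K)⁻¹ + (2 : K)⁻¹ = 1 := by field_simp; ring
    have haa : a + a = P + Q := by
      rw [ha, ← add_smul, half, one_smul]
    have hab : a + b = P := by
      rw [ha, hb, ← smul_add]
      have : P + Q + (P - Q) = P + P := by abel
      rw [this, ← two_smul K P, smul_smul, inv_mul_cancel₀ hchar, one_smul]
    have hab' : a - b = Q := by
      rw [ha, hb, ← smul_sub]
      have : P + Q - (P - Q) = Q + Q := by abel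
      rw [this, ← two_smul K Q, smul_smul, inv_mul_cancel₀ hchar, one_smul]
    have h1 := h (x + a) a
    have h2 := h (x + a) b
    rw [add_sub_cancel_right] at h1
    have e1 : x + a + a = x + P + Q := by rw [add_assoc, haa, ← add_assoc]
    have e2 : x + a + b = x + P := by rw [add_assoc, hab]
    have e3 : x + a - b = x + Q := by rw [add_sub_assoc, hab']
    rw [e1] at h1
    rw [e2, e3] at h2
    rw [h1, h2]
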